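/- For every β > 0 and z ≥ 0, lim_{m→0⁺} E_{m,β}[exp(2z Σ_{x∈Λ} cos φ_x)] = Z_Λ(β,z) (the sine-Gordon representation of the Coulomb-gas partition function). -/

import Mathlib

open scoped BigOperators
open Filter

/-- The square lattice torus `Λ` of side `L^R` (`L` odd): integer points `x`
with `max |x₀| |x₁| < L^R / 2`. -/
noncomputable def Lam (L R : ℕ) : Finset (ℤ × ℤ) :=
  ((Finset.Icc (-(L : ℤ) ^ R) ((L : ℤ) ^ R)) ×ˢ
      (Finset.Icc (-(L : ℤ) ^ R) ((L : ℤ) ^ R))).filter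
    (fun x => 2 * |x.1| < (L : ℤ) ^ R ∧ 2 * |x.2| < (L : ℤ) ^ R)

/-- Dot product `k·x` where `k = (2π/L^R) n` is a reciprocal lattice vector. -/
noncomputable def kdot (L R : ℕ) (n x : ℤ × ℤ) : ℝ :=
  (2 * Real.pi / (L : ℝ) ^ R) * ((n.1 : ℝ) * (x.1 : ℝ) + (n.2 : ℝ) * (x.2 : ℝ))

/-- Fourier symbol `Δ̂(k)` of the lattice Laplacian at `k = (2π/L^R) n`. -/
noncomputable def hatDelta (L R : ℕ) (n : ℤ × ℤ) : ℝ :=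
  -2 * ((1 - Real.cos (2 * Real.pi * (n.1 : ℝ) / (L : ℝ) ^ R)) +
        (1 - Real.cos (2 * Real.pi * (n.2 : ℝ) / (L : ℝ) ^ R)))

/-- The two-dimensional electrostatic potential `W_Λ(x|0)`. -/
noncomputable def Wfree (L R : ℕ) (x : ℤ × ℤ) : ℝ :=
  (((Lam L R).card : ℝ))⁻¹ *
    ∑ n ∈ (Lam L R).erase (0, 0),
      ((Complex.exp (Complex.I * (kdot L R n x : ℂ)) - 1) / (-(hatDelta L R n : ℂ))).re

/-- Neutral configurations of `n` charged (`±1`) particles in `Λ`. -/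
noncomputable def Omega0 (L R n : ℕ) : Finset (Fin n → ℤ × (ℤ × ℤ)) :=
  (Fintype.piFinset fun _ : Fin n => ({-1, 1} : Finset ℤ) ×ˢ Lam L R).filter
    (fun ω => ∑ j, (ω j).1 = 0)

/-- Coulomb energy `H_Λ(ω)` of a configuration. -/
noncomputable def energy (L R : ℕ) {n : ℕ} (ω : Fin n → ℤ × (ℤ × ℤ)) : ℝ :=
  ∑ i : Fin n, ∑ j ∈ Finset.Ioi i,
    (((ω i).1 * (ω j).1 : ℤ) : ℝ) * Wfree L R ((ω i).2 - (ω j).2)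

/-- Energy `H_Λ(ω ∧ {p₁,p₂})` of a configuration augmented by probes of charge `η`
at `x` and `-η` at `y`. -/
noncomputable def energyP (L R : ℕ) (η : ℝ) (x y : ℤ × ℤ) {n : ℕ}
    (ω : Fin n → ℤ × (ℤ × ℤ)) : ℝ :=
  energy L R ω
    + η * ∑ j, (((ω j).1 : ℤ) : ℝ) * (Wfree L R ((ω j).2 - x) - Wfree L R ((ω j).2 - y))
    - η ^ 2 * Wfree L R (x - y)

/-- Grand canonical partition function `Z_Λ(β,z)`. -/
noncomputable def Zgc (L R : ℕ) (β z : ℝ) : ℝ :=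
  ∑' n : ℕ, (z ^ n / (n.factorial : ℝ)) *
    ∑ ω ∈ Omega0 L R n, Real.exp (-β * energy L R ω)

/-- Partition function `Z^{p₁,p₂}_Λ(β,z)` with two fractional-charge probes. -/
noncomputable def Zprobe (L R : ℕ) (β z η : ℝ) (x y : ℤ × ℤ) : ℝ :=
  ∑' n : ℕ, (z ^ n / (n.factorial : ℝ)) *
    ∑ ω ∈ Omega0 L R n, Real.exp (-β * energyP L R η x y ω)

/-- The constant `c_E = −(2γ_E + ln 8)/(4π)`. -/
noncomputable def cE : ℝ :=
  -(2 * Real.eulerMascheroniConstant + Real.log 8) / (4 * Real.pi)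

/-- Euclidean norm of a point of `ℤ²`. -/
noncomputable def znorm (x : ℤ × ℤ) : ℝ :=
  Real.sqrt ((x.1 : ℝ) ^ 2 + (x.2 : ℝ) ^ 2)

/-- Yukawa potential `W_Λ(x;m)`. -/
noncomputable def Wyuk (L R : ℕ) (m : ℝ) (x : ℤ × ℤ) : ℂ :=
  (((Lam L R).card : ℂ))⁻¹ *
    ∑ n ∈ Lam L R,
      Complex.exp (Complex.I * (kdot L R n x : ℂ)) / ((m ^ 2 - hatDelta L R n : ℝ) : ℂ)

open MeasureTheory

/-- `μ` is the centered Gaussian measure on fields `φ : ℤ² → ℝ` (supported on `Λ`)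
with covariance matrix `β W_Λ(x−y;m)`, characterized through its characteristic
function. -/
def IsGaussianCov (L R : ℕ) (β m : ℝ) (μ : Measure ((ℤ × ℤ) → ℝ)) : Prop :=
  IsProbabilityMeasure μ ∧
  ∀ t : (ℤ × ℤ) → ℝ, (∀ x : ℤ × ℤ, x ∉ Lam L R → t x = 0) →
    (∫ φ : (ℤ × ℤ) → ℝ,
        Complex.exp (Complex.I * ((∑ x ∈ Lam L R, t x * φ x : ℝ) : ℂ)) ∂μ) =
      Complex.exp
        (-(((β / 2) *
            ∑ x ∈ Lam L R, ∑ y ∈ Lam L R,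
              t x * t y * (Wyuk L R m (x - y)).re : ℝ) : ℂ))

section SineGordonAux

open Complex MeasureTheory

lemma SG.zero_mem_Lam {L R : ℕ} (hL : 0 < L) : ((0, 0) : ℤ × ℤ) ∈ Lam L R := by
  have h : (0:ℤ) < (L:ℤ) ^ R := pow_pos (by exact_mod_cast hL) R
  refine Finset.mem_filter.2 ⟨Finset.mem_product.2 ⟨?_, ?_⟩, ?_, ?_⟩ <;>
    simp <;> linarith

lemma SG.Lam_card_pos {L R : ℕ} (hL : 0 < L) : 0 < ((Lam L R).card : ℝ) := by
  have : (Lam L R).Nonempty := ⟨_, SG.zero_mem_Lam hL⟩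
  exact_mod_cast Finset.card_pos.2 this

lemma SG.hatDelta_zero (L R : ℕ) : hatDelta L R (0, 0) = 0 := by
  simp [hatDelta]

lemma SG.hatDelta_nonpos (L R : ℕ) (n : ℤ × ℤ) : hatDelta L R n ≤ 0 := by
  have h1 := Real.cos_le_one (2 * Real.pi * (n.1 : ℝ) / (L : ℝ) ^ R)
  have h2 := Real.cos_le_one (2 * Real.pi * (n.2 : ℝ) / (L : ℝ) ^ R)
  unfold hatDelta; nlinarith

lemma SG.hatDelta_neg {L R : ℕ} (hL : 0 < L) {n : ℤ × ℤ}
    (hn : n ∈ (Lam L R).erase (0, 0)) : hatDelta L R n < 0 := by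
  obtain ⟨hne, hmem⟩ := Finset.mem_erase.1 hn
  rw [Lam, Finset.mem_filter] at hmem
  obtain ⟨-, h1, h2⟩ := hmem
  have hLR : (0:ℝ) < (L : ℝ) ^ R := pow_pos (by exact_mod_cast hL) R
  have key : ∀ k : ℤ, 2 * |k| < (L:ℤ) ^ R → k ≠ 0 →
      Real.cos (2 * Real.pi * (k : ℝ) / (L : ℝ) ^ R) < 1 := by
    intro k hk hk0
    have hkR : 2 * |(k:ℝ)| < (L:ℝ) ^ R := by exact_mod_cast hk
    rcases lt_or_eq_of_le (Real.cos_le_one (2 * Real.pi * (k : ℝ) / (L : ℝ) ^ R)) with h | h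
    · exact h
    exfalso
    obtain ⟨j, hj⟩ := (Real.cos_eq_one_iff _).1 h
    have hπ := Real.pi_pos
    have h2π : (2 * Real.pi) ≠ 0 := by positivity
    have hja : (j : ℝ) = (k : ℝ) / (L : ℝ) ^ R := by
      have : (j:ℝ) * (2 * Real.pi) = ((k:ℝ) / (L:ℝ) ^ R) * (2 * Real.pi) := by
        rw [hj]; field_simp
      exact mul_right_cancel₀ h2π this
    have hjabs : |(j : ℝ)| < 1 / 2 := by
      rw [hja, abs_div, abs_of_pos hLR, div_lt_iff₀ hLR]
      linarith
    have hj0 : j = 0 := by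
      by_contra hj0
      have : (1:ℝ) ≤ |(j:ℝ)| := by exact_mod_cast Int.one_le_abs hj0
      linarith
    rw [hj0] at hja
    simp only [Int.cast_zero] at hja
    have : (k:ℝ) = 0 := by
      field_simp at hja; linarith [hja]
    exact hk0 (by exact_mod_cast this)
  have hcop : n.1 ≠ 0 ∨ n.2 ≠ 0 := by
    by_contra h; push_neg at h
    exact hne (Prod.ext h.1 h.2)
  have c1 := Real.cos_le_one (2 * Real.pi * (n.1 : ℝ) / (L : ℝ) ^ R)
  have c2 := Real.cos_le_one (2 * Real.pi * (n.2 : ℝ) / (L : ℝ) ^ R)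
  unfold hatDelta
  rcases hcop with h | h
  · have := key n.1 h1 h; nlinarith
  · have := key n.2 h2 h; nlinarith

lemma SG.kdot_zero_left (L R : ℕ) (x : ℤ × ℤ) : kdot L R (0, 0) x = 0 := by
  simp [kdot]

lemma SG.kdot_zero_right (L R : ℕ) (n : ℤ × ℤ) : kdot L R n (0, 0) = 0 := by
  simp [kdot]

lemma SG.kdot_neg_right (L R : ℕ) (n x : ℤ × ℤ) : kdot L R n (-x) = -(kdot L R n x) := by
  simp only [kdot, Prod.fst_neg, Prod.snd_neg, Int.cast_neg]
  ring

lemma SG.re_exp_div (θ r : ℝ) :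
    (Complex.exp (Complex.I * (θ : ℂ)) / ((r : ℝ) : ℂ)).re = Real.cos θ / r := by
  rw [mul_comm, Complex.div_ofReal_re, Complex.exp_ofReal_mul_I_re]

lemma SG.re_exp_sub_one_div (θ h : ℝ) :
    ((Complex.exp (Complex.I * (θ : ℂ)) - 1) / (-(h : ℂ))).re = (Real.cos θ - 1) / (-h) := by
  have : (-(h:ℂ)) = (((-h : ℝ)) : ℂ) := by push_cast; ring
  rw [this, Complex.div_ofReal_re, mul_comm]
  congr 1
  simp [Complex.sub_re, Complex.exp_ofReal_mul_I_re]


/-- Smooth part of the Yukawa potential (zero mode removed). -/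
noncomputable def SG.V (L R : ℕ) (m : ℝ) (x : ℤ × ℤ) : ℝ :=
  (((Lam L R).card : ℝ))⁻¹ *
    ∑ n ∈ (Lam L R).erase (0, 0), Real.cos (kdot L R n x) / (m ^ 2 - hatDelta L R n)

lemma SG.Wyuk_re {L R : ℕ} (hL : 0 < L) (m : ℝ) (x : ℤ × ℤ) :
    (Wyuk L R m x).re = (((Lam L R).card : ℝ))⁻¹ * (m ^ 2)⁻¹ + SG.V L R m x := by
  have h0 : ((0, 0) : ℤ × ℤ) ∈ Lam L R := SG.zero_mem_Lam hL
  have hcast : (((Lam L R).card : ℂ))⁻¹ = Complex.ofReal ((((Lam L R).card : ℝ))⁻¹) := by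
    push_cast; rfl
  rw [Wyuk, hcast, Complex.re_ofReal_mul, ← Finset.add_sum_erase _ _ h0]
  rw [Complex.add_re, Complex.re_sum, mul_add, SG.V]
  congr 1
  · congr 1
    rw [SG.kdot_zero_left, SG.hatDelta_zero]
    have := SG.re_exp_div 0 (m ^ 2 - 0)
    simp only [Complex.ofReal_zero, sub_zero] at this ⊢
    rw [this, Real.cos_zero, one_div]
  · congr 1
    exact Finset.sum_congr rfl fun n _ => SG.re_exp_div _ _

lemma SG.Wfree_eq (L R : ℕ) (x : ℤ × ℤ) :
    Wfree L R x = SG.V L R 0 x - SG.V L R 0 (0, 0) := by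
  unfold Wfree SG.V
  rw [← mul_sub, ← Finset.sum_sub_distrib]
  congr 1
  refine Finset.sum_congr rfl fun n _ => ?_
  rw [SG.re_exp_sub_one_div, SG.kdot_zero_right, Real.cos_zero]
  have h0 : (0:ℝ) ^ 2 - hatDelta L R n = -(hatDelta L R n) := by ring
  rw [h0, sub_div]

lemma SG.V_zero_eq (L R : ℕ) (x : ℤ × ℤ) :
    SG.V L R 0 x = Wfree L R x + SG.V L R 0 (0, 0) := by
  rw [SG.Wfree_eq]; ring

lemma SG.Wfree_zero (L R : ℕ) : Wfree L R (0, 0) = 0 := by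
  rw [SG.Wfree_eq]; ring

lemma SG.Wfree_neg (L R : ℕ) (x : ℤ × ℤ) : Wfree L R (-x) = Wfree L R x := by
  unfold Wfree
  congr 1
  refine Finset.sum_congr rfl fun n _ => ?_
  rw [SG.re_exp_sub_one_div, SG.re_exp_sub_one_div, SG.kdot_neg_right, Real.cos_neg]

lemma SG.V_tendsto {L R : ℕ} (hL : 0 < L) (x : ℤ × ℤ) :
    Filter.Tendsto (fun m : ℝ => SG.V L R m x) (nhds 0) (nhds (SG.V L R 0 x)) := by
  unfold SG.V
  apply Filter.Tendsto.const_mul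
  apply tendsto_finset_sum
  intro n hn
  have hne : (0:ℝ) ^ 2 - hatDelta L R n ≠ 0 := by
    have := SG.hatDelta_neg hL hn
    nlinarith
  exact (ContinuousAt.div continuousAt_const
    (((continuous_pow 2).continuousAt).sub continuousAt_const) hne)


/-- All (not necessarily neutral) configurations of `n` particles. -/
noncomputable def SG.cfg (L R n : ℕ) : Finset (Fin n → ℤ × (ℤ × ℤ)) :=
  Fintype.piFinset fun _ : Fin n => ({-1, 1} : Finset ℤ) ×ˢ Lam L R

lemma SG.Omega0_eq (L R n : ℕ) :
    Omega0 L R n = (SG.cfg L R n).filter (fun ω => ∑ j, (ω j).1 = 0) := rfl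

lemma SG.cfg_mem_Lam {L R n : ℕ} {ω : Fin n → ℤ × (ℤ × ℤ)} (hω : ω ∈ SG.cfg L R n)
    (j : Fin n) : (ω j).2 ∈ Lam L R := by
  have := Fintype.mem_piFinset.1 hω j
  exact (Finset.mem_product.1 this).2

/-- Full quadratic form of the Yukawa covariance on a configuration. -/
noncomputable def SG.Qf (L R : ℕ) (m : ℝ) {n : ℕ} (ω : Fin n → ℤ × (ℤ × ℤ)) : ℝ :=
  ∑ i, ∑ j, (((ω i).1 : ℝ) * ((ω j).1 : ℝ)) * (Wyuk L R m ((ω i).2 - (ω j).2)).re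

/-- Quadratic form of the smooth part on a configuration. -/
noncomputable def SG.QV (L R : ℕ) (m : ℝ) {n : ℕ} (ω : Fin n → ℤ × (ℤ × ℤ)) : ℝ :=
  ∑ i, ∑ j, (((ω i).1 : ℝ) * ((ω j).1 : ℝ)) * SG.V L R m ((ω i).2 - (ω j).2)

lemma SG.sum_ind {L R : ℕ} {n : ℕ} (ω : Fin n → ℤ × (ℤ × ℤ))
    (hω : ∀ j, (ω j).2 ∈ Lam L R) (g : ℤ × ℤ → ℝ) :
    ∑ x ∈ Lam L R, (∑ j, if (ω j).2 = x then ((ω j).1 : ℝ) else 0) * g x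
      = ∑ j, ((ω j).1 : ℝ) * g ((ω j).2) := by
  have h1 : ∀ x ∈ Lam L R,
      (∑ j, if (ω j).2 = x then ((ω j).1 : ℝ) else 0) * g x
        = ∑ j, if (ω j).2 = x then ((ω j).1 : ℝ) * g x else 0 := by
    intro x _
    rw [Finset.sum_mul]
    exact Finset.sum_congr rfl fun j _ => by rw [ite_mul, zero_mul]
  rw [Finset.sum_congr rfl h1, Finset.sum_comm]
  refine Finset.sum_congr rfl fun j _ => ?_
  rw [Finset.sum_ite_eq (Lam L R) ((ω j).2) (fun x => ((ω j).1 : ℝ) * g x), if_pos (hω j)]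

lemma SG.quad_ind {L R : ℕ} {n : ℕ} (ω : Fin n → ℤ × (ℤ × ℤ))
    (hω : ∀ j, (ω j).2 ∈ Lam L R) (W : ℤ × ℤ → ℝ) :
    ∑ x ∈ Lam L R, ∑ y ∈ Lam L R,
        (∑ i, if (ω i).2 = x then ((ω i).1 : ℝ) else 0) *
          (∑ j, if (ω j).2 = y then ((ω j).1 : ℝ) else 0) * W (x - y)
      = ∑ i, ∑ j, (((ω i).1 : ℝ) * ((ω j).1 : ℝ)) * W ((ω i).2 - (ω j).2) := by
  have h1 : ∀ x ∈ Lam L R,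
      ∑ y ∈ Lam L R, (∑ i, if (ω i).2 = x then ((ω i).1 : ℝ) else 0) *
          (∑ j, if (ω j).2 = y then ((ω j).1 : ℝ) else 0) * W (x - y)
        = (∑ i, if (ω i).2 = x then ((ω i).1 : ℝ) else 0) *
            ∑ j, ((ω j).1 : ℝ) * W (x - (ω j).2) := by
    intro x _
    rw [← SG.sum_ind ω hω (fun y => W (x - y)), Finset.mul_sum]
    exact Finset.sum_congr rfl fun y _ => by ring
  rw [Finset.sum_congr rfl h1, SG.sum_ind ω hω (fun x => ∑ j, ((ω j).1 : ℝ) * W (x - (ω j).2))]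
  refine Finset.sum_congr rfl fun i _ => ?_
  rw [Finset.mul_sum]
  exact Finset.sum_congr rfl fun j _ => by ring

/-- Splitting a symmetric double sum with vanishing diagonal. -/
lemma SG.sum_sum_symm {n : ℕ} (f : Fin n → Fin n → ℝ) (hd : ∀ i, f i i = 0)
    (hs : ∀ i j, f i j = f j i) :
    ∑ i, ∑ j, f i j = 2 * ∑ i, ∑ j ∈ Finset.Ioi i, f i j := by
  have huniv : ∀ i : Fin n, (Finset.univ : Finset (Fin n))
      = insert i (Finset.Iio i ∪ Finset.Ioi i) := by
    intro i
    ext j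
    simp only [Finset.mem_univ, Finset.mem_insert, Finset.mem_union, Finset.mem_Iio,
      Finset.mem_Ioi, true_iff]
    rcases lt_trichotomy j i with h | h | h
    · exact Or.inr (Or.inl h)
    · exact Or.inl h
    · exact Or.inr (Or.inr h)
  have hnotmem : ∀ i : Fin n, i ∉ Finset.Iio i ∪ Finset.Ioi i := by
    intro i
    simp [Finset.mem_union]
  have hdisj : ∀ i : Fin n, Disjoint (Finset.Iio i) (Finset.Ioi i) := by
    intro i
    refine Finset.disjoint_left.2 fun j hj hj' => ?_
    simp only [Finset.mem_Iio] at hj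
    simp only [Finset.mem_Ioi] at hj'
    exact absurd (hj.trans hj') (lt_irrefl j)
  have hsplit : ∀ i : Fin n, ∑ j, f i j
      = ∑ j ∈ Finset.Iio i, f i j + ∑ j ∈ Finset.Ioi i, f i j := by
    intro i
    rw [huniv i, Finset.sum_insert (hnotmem i), hd i, zero_add, Finset.sum_union (hdisj i)]
  rw [Finset.sum_congr rfl fun i _ => hsplit i, Finset.sum_add_distrib]
  have hswap : ∑ i, ∑ j ∈ Finset.Iio i, f i j = ∑ i, ∑ j ∈ Finset.Ioi i, f i j := by
    rw [Finset.sum_comm' (t' := Finset.univ) (s' := fun j => Finset.Ioi j)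
      (fun i j => by
        simp only [Finset.mem_univ, Finset.mem_Iio, Finset.mem_Ioi, true_and, and_true])]
    exact Finset.sum_congr rfl fun j _ => Finset.sum_congr rfl fun i _ => hs i j
  rw [hswap]
  ring

lemma SG.Qf_decomp {L R : ℕ} (hL : 0 < L) (m : ℝ) {n : ℕ} (ω : Fin n → ℤ × (ℤ × ℤ)) :
    SG.Qf L R m ω = (∑ j, ((ω j).1 : ℝ)) ^ 2 * ((((Lam L R).card : ℝ))⁻¹ * (m ^ 2)⁻¹)
      + SG.QV L R m ω := by
  unfold SG.Qf SG.QV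
  have h1 : ∀ i j : Fin n, (((ω i).1 : ℝ) * ((ω j).1 : ℝ)) * (Wyuk L R m ((ω i).2 - (ω j).2)).re
      = (((ω i).1 : ℝ) * ((ω j).1 : ℝ)) * ((((Lam L R).card : ℝ))⁻¹ * (m ^ 2)⁻¹)
        + (((ω i).1 : ℝ) * ((ω j).1 : ℝ)) * SG.V L R m ((ω i).2 - (ω j).2) := by
    intro i j
    rw [SG.Wyuk_re hL, mul_add]
  have h2 : (∑ j, ((ω j).1 : ℝ)) ^ 2 * ((((Lam L R).card : ℝ))⁻¹ * (m ^ 2)⁻¹)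
      = ∑ i, ∑ j, (((ω i).1 : ℝ) * ((ω j).1 : ℝ)) * ((((Lam L R).card : ℝ))⁻¹ * (m ^ 2)⁻¹) := by
    rw [sq, Finset.sum_mul_sum, Finset.sum_mul]
    exact Finset.sum_congr rfl fun i _ => by rw [Finset.sum_mul]
  calc ∑ i, ∑ j, (((ω i).1 : ℝ) * ((ω j).1 : ℝ)) * (Wyuk L R m ((ω i).2 - (ω j).2)).re
      = ∑ i, ∑ j, ((((ω i).1 : ℝ) * ((ω j).1 : ℝ)) * ((((Lam L R).card : ℝ))⁻¹ * (m ^ 2)⁻¹)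
          + (((ω i).1 : ℝ) * ((ω j).1 : ℝ)) * SG.V L R m ((ω i).2 - (ω j).2)) := by
        exact Finset.sum_congr rfl fun i _ => Finset.sum_congr rfl fun j _ => h1 i j
    _ = _ := by
        rw [Finset.sum_congr rfl fun i (_ : i ∈ Finset.univ) => Finset.sum_add_distrib,
          Finset.sum_add_distrib, h2]

lemma SG.QV_tendsto {L R : ℕ} (hL : 0 < L) {n : ℕ} (ω : Fin n → ℤ × (ℤ × ℤ)) :
    Filter.Tendsto (fun m : ℝ => SG.QV L R m ω) (nhds 0) (nhds (SG.QV L R 0 ω)) := by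
  unfold SG.QV
  refine tendsto_finset_sum _ fun i _ => tendsto_finset_sum _ fun j _ => ?_
  exact (SG.V_tendsto hL _).const_mul _

lemma SG.QV_zero_neutral {L R : ℕ} {n : ℕ} {ω : Fin n → ℤ × (ℤ × ℤ)}
    (hneu : ∑ j, (ω j).1 = 0) :
    SG.QV L R 0 ω = 2 * energy L R ω := by
  have hσ : (∑ j, ((ω j).1 : ℝ)) = 0 := by
    have : ((∑ j, (ω j).1 : ℤ) : ℝ) = 0 := by rw [hneu]; norm_num
    rw [← this]; push_cast; rfl
  unfold SG.QV
  have h1 : ∀ i j : Fin n, (((ω i).1 : ℝ) * ((ω j).1 : ℝ)) * SG.V L R 0 ((ω i).2 - (ω j).2)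
      = (((ω i).1 : ℝ) * ((ω j).1 : ℝ)) * Wfree L R ((ω i).2 - (ω j).2)
        + (((ω i).1 : ℝ) * ((ω j).1 : ℝ)) * SG.V L R 0 (0, 0) := by
    intro i j
    rw [SG.V_zero_eq, mul_add]
  rw [Finset.sum_congr rfl fun i _ => Finset.sum_congr rfl fun j _ => h1 i j]
  rw [Finset.sum_congr rfl fun i (_ : i ∈ Finset.univ) => Finset.sum_add_distrib,
    Finset.sum_add_distrib]
  have h2 : ∑ i, ∑ j, (((ω i).1 : ℝ) * ((ω j).1 : ℝ)) * SG.V L R 0 (0, 0) = 0 := by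
    have : ∑ i, ∑ j, (((ω i).1 : ℝ) * ((ω j).1 : ℝ)) * SG.V L R 0 (0, 0)
        = (∑ j, ((ω j).1 : ℝ)) ^ 2 * SG.V L R 0 (0, 0) := by
      rw [sq, Finset.sum_mul_sum, Finset.sum_mul]
      exact Finset.sum_congr rfl fun i _ => by rw [Finset.sum_mul]
    rw [this, hσ]; ring
  rw [h2, add_zero]
  rw [SG.sum_sum_symm (fun i j => (((ω i).1 : ℝ) * ((ω j).1 : ℝ)) * Wfree L R ((ω i).2 - (ω j).2))
    (fun i => by
      show ((ω i).1 : ℝ) * ((ω i).1 : ℝ) * Wfree L R ((ω i).2 - (ω i).2) = 0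
      rw [sub_self, ← Prod.mk_zero_zero, SG.Wfree_zero]; ring)
    (fun i j => by
      show ((ω i).1 : ℝ) * ((ω j).1 : ℝ) * Wfree L R ((ω i).2 - (ω j).2)
        = ((ω j).1 : ℝ) * ((ω i).1 : ℝ) * Wfree L R ((ω j).2 - (ω i).2)
      rw [show (ω j).2 - (ω i).2 = -((ω i).2 - (ω j).2) from by ring, SG.Wfree_neg]; ring)]
  unfold energy
  congr 1
  refine Finset.sum_congr rfl fun i _ => Finset.sum_congr rfl fun j _ => ?_
  push_cast
  ring

lemma SG.exp_tendsto {L R : ℕ} (hL : 0 < L) {β : ℝ} (hβ : 0 < β) {n : ℕ}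
    (ω : Fin n → ℤ × (ℤ × ℤ)) :
    Filter.Tendsto (fun m : ℝ => Real.exp (-(β / 2 * SG.Qf L R m ω)))
      (nhdsWithin 0 (Set.Ioi 0))
      (nhds (if (∑ j, (ω j).1) = 0 then Real.exp (-β * energy L R ω) else 0)) := by
  have hQV := SG.QV_tendsto hL (R := R) ω
  by_cases hneu : (∑ j, (ω j).1) = 0
  · rw [if_pos hneu]
    have hσ : (∑ j, ((ω j).1 : ℝ)) = 0 := by
      have : ((∑ j, (ω j).1 : ℤ) : ℝ) = 0 := by rw [hneu]; norm_num
      rw [← this]; push_cast; rfl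
    have heq : ∀ m : ℝ, Real.exp (-(β / 2 * SG.Qf L R m ω))
        = Real.exp (-(β / 2 * SG.QV L R m ω)) := by
      intro m
      rw [SG.Qf_decomp hL m ω, hσ]
      norm_num
    have h1 : Filter.Tendsto (fun m : ℝ => Real.exp (-(β / 2 * SG.QV L R m ω))) (nhds 0)
        (nhds (Real.exp (-(β / 2 * SG.QV L R 0 ω)))) :=
      (Real.continuous_exp.tendsto _).comp ((hQV.const_mul (β / 2)).neg)
    have h2 : Real.exp (-(β / 2 * SG.QV L R 0 ω)) = Real.exp (-β * energy L R ω) := by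
      rw [SG.QV_zero_neutral hneu]; ring_nf
    rw [← h2]
    exact Filter.Tendsto.congr (fun m => (heq m).symm) (h1.mono_left nhdsWithin_le_nhds)
  · rw [if_neg hneu]
    set q : ℝ := (∑ j, ((ω j).1 : ℝ)) ^ 2 * (((Lam L R).card : ℝ))⁻¹ with hq
    have hσne : (∑ j, ((ω j).1 : ℝ)) ≠ 0 := by
      have : (∑ j, ((ω j).1 : ℝ)) = ((∑ j, (ω j).1 : ℤ) : ℝ) := by push_cast; rfl
      rw [this]
      exact_mod_cast hneu
    have hqpos : 0 < q := mul_pos (sq_pos_iff.2 hσne) (inv_pos.2 (SG.Lam_card_pos hL))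
    have h1 : Filter.Tendsto (fun m : ℝ => m ^ 2) (nhdsWithin 0 (Set.Ioi 0))
        (nhdsWithin 0 (Set.Ioi 0)) := by
      apply tendsto_nhdsWithin_of_tendsto_nhds_of_eventually_within
      · have := ((continuous_pow 2).tendsto (0 : ℝ)).mono_left
          (nhdsWithin_le_nhds (s := Set.Ioi (0:ℝ)))
        simpa using this
      · filter_upwards [self_mem_nhdsWithin] with m hm
        exact pow_pos (show (0:ℝ) < m from hm) 2
    have h2 : Filter.Tendsto (fun m : ℝ => (m ^ 2)⁻¹) (nhdsWithin 0 (Set.Ioi 0)) Filter.atTop :=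
      tendsto_inv_nhdsGT_zero.comp h1
    have h3 : Filter.Tendsto (fun m : ℝ => SG.Qf L R m ω) (nhdsWithin 0 (Set.Ioi 0))
        Filter.atTop := by
      have h4 : Filter.Tendsto (fun m : ℝ => q * (m ^ 2)⁻¹ + SG.QV L R m ω)
          (nhdsWithin 0 (Set.Ioi 0)) Filter.atTop :=
        (h2.const_mul_atTop hqpos).atTop_add (hQV.mono_left nhdsWithin_le_nhds)
      refine h4.congr fun m => ?_
      rw [SG.Qf_decomp hL m ω, hq]
      ring
    have h5 : Filter.Tendsto (fun m : ℝ => -(β / 2 * SG.Qf L R m ω))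
        (nhdsWithin 0 (Set.Ioi 0)) Filter.atBot := by
      have h6 := h3.const_mul_atTop (show (0:ℝ) < β / 2 by linarith)
      exact tendsto_neg_atTop_atBot.comp h6
    exact Real.tendsto_exp_atBot.comp h5

set_option maxHeartbeats 1000000 in
lemma SG.charfun {L R : ℕ} {β m : ℝ} {μ : Measure ((ℤ × ℤ) → ℝ)}
    (hμ : IsGaussianCov L R β m μ) {n : ℕ} {ω : Fin n → ℤ × (ℤ × ℤ)}
    (hω : ω ∈ SG.cfg L R n) :
    ∫ φ : (ℤ × ℤ) → ℝ,
        Complex.exp (Complex.I * ((∑ j, ((ω j).1 : ℝ) * φ ((ω j).2) : ℝ) : ℂ)) ∂μ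
      = Complex.exp (-((β / 2 * SG.Qf L R m ω : ℝ) : ℂ)) := by
  classical
  have hX := SG.cfg_mem_Lam hω
  have ht0 : ∀ x : ℤ × ℤ, x ∉ Lam L R →
      (fun x => ∑ j, if (ω j).2 = x then ((ω j).1 : ℝ) else 0) x = 0 := by
    intro x hx
    refine Finset.sum_eq_zero fun j _ => ?_
    rw [if_neg]
    intro h
    exact hx (h ▸ hX j)
  have h := hμ.2 (fun x => ∑ j, if (ω j).2 = x then ((ω j).1 : ℝ) else 0) ht0
  have hquad : ∑ x ∈ Lam L R, ∑ y ∈ Lam L R,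
      (∑ i, if (ω i).2 = x then ((ω i).1 : ℝ) else 0) *
        (∑ j, if (ω j).2 = y then ((ω j).1 : ℝ) else 0) * (Wyuk L R m (x - y)).re
      = SG.Qf L R m ω := SG.quad_ind ω hX (fun v => (Wyuk L R m v).re)
  rw [hquad] at h
  rw [← h]
  refine integral_congr_ae (Filter.Eventually.of_forall fun φ => ?_)
  show Complex.exp (Complex.I * ((∑ j, ((ω j).1 : ℝ) * φ ((ω j).2) : ℝ) : ℂ))
      = Complex.exp (Complex.I *
        ((∑ x ∈ Lam L R, (∑ j, if (ω j).2 = x then ((ω j).1 : ℝ) else 0) * φ x : ℝ) : ℂ))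
  rw [SG.sum_ind ω hX φ]

lemma SG.exp_le_one {L R : ℕ} {β m : ℝ} {μ : Measure ((ℤ × ℤ) → ℝ)}
    (hμ : IsGaussianCov L R β m μ) {n : ℕ} {ω : Fin n → ℤ × (ℤ × ℤ)}
    (hω : ω ∈ SG.cfg L R n) :
    Real.exp (-(β / 2 * SG.Qf L R m ω)) ≤ 1 := by
  haveI := hμ.1
  have h := SG.charfun hμ hω
  have hb : ‖∫ φ : (ℤ × ℤ) → ℝ,
      Complex.exp (Complex.I * ((∑ j, ((ω j).1 : ℝ) * φ ((ω j).2) : ℝ) : ℂ)) ∂μ‖ ≤ 1 := by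
    have h1 := norm_integral_le_of_norm_le_const (μ := μ) (C := 1)
      (f := fun φ : (ℤ × ℤ) → ℝ =>
        Complex.exp (Complex.I * ((∑ j, ((ω j).1 : ℝ) * φ ((ω j).2) : ℝ) : ℂ)))
      (Filter.Eventually.of_forall fun φ => by
        show ‖Complex.exp (Complex.I * ((∑ j, ((ω j).1 : ℝ) * φ ((ω j).2) : ℝ) : ℂ))‖ ≤ 1
        rw [mul_comm, Complex.norm_exp_ofReal_mul_I])
    simpa using h1
  rw [h] at hb
  rwa [show -((β / 2 * SG.Qf L R m ω : ℝ) : ℂ) = Complex.ofReal (-(β / 2 * SG.Qf L R m ω)) from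
    by push_cast; ring, Complex.norm_exp_ofReal] at hb

lemma SG.integrable_exp {μ : Measure ((ℤ × ℤ) → ℝ)} [IsProbabilityMeasure μ] {k : ℕ}
    (ω : Fin k → ℤ × (ℤ × ℤ)) :
    Integrable (fun φ : (ℤ × ℤ) → ℝ =>
      Complex.exp (Complex.I * ((∑ j, ((ω j).1 : ℝ) * φ ((ω j).2) : ℝ) : ℂ))) μ := by
  have hmeas : Measurable fun φ : (ℤ × ℤ) → ℝ =>
      Complex.exp (Complex.I * ((∑ j, ((ω j).1 : ℝ) * φ ((ω j).2) : ℝ) : ℂ)) := by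
    apply Complex.measurable_exp.comp
    apply Measurable.const_mul
    apply Complex.measurable_ofReal.comp
    exact Finset.measurable_sum _ fun j _ => (measurable_pi_apply ((ω j).2)).const_mul _
  refine ⟨hmeas.aestronglyMeasurable, ?_⟩
  refine MeasureTheory.HasFiniteIntegral.of_bounded (C := 1)
    (Filter.Eventually.of_forall fun φ => ?_)
  rw [mul_comm, Complex.norm_exp_ofReal_mul_I]

lemma SG.h2cos (θ : ℝ) : ((2 * Real.cos θ : ℝ) : ℂ)
    = ∑ σ ∈ ({-1, 1} : Finset ℤ), Complex.exp (Complex.I * (((σ : ℝ) * θ : ℝ) : ℂ)) := by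
  rw [Finset.sum_insert (by decide), Finset.sum_singleton]
  push_cast [Complex.ofReal_cos]
  rw [Complex.two_cos,
    show Complex.I * (-1 * (θ : ℂ)) = -(θ : ℂ) * Complex.I from by ring,
    show Complex.I * (1 * (θ : ℂ)) = (θ : ℂ) * Complex.I from by ring]
  exact add_comm _ _

lemma SG.pow_expand {L R : ℕ} (k : ℕ) (φ : (ℤ × ℤ) → ℝ) :
    (((2 * ∑ x ∈ Lam L R, Real.cos (φ x) : ℝ)) : ℂ) ^ k
      = ∑ ω ∈ SG.cfg L R k,
          Complex.exp (Complex.I * ((∑ j, ((ω j).1 : ℝ) * φ ((ω j).2) : ℝ) : ℂ)) := by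
  classical
  calc (((2 * ∑ x ∈ Lam L R, Real.cos (φ x) : ℝ)) : ℂ) ^ k
      = (∑ p ∈ ({-1, 1} : Finset ℤ) ×ˢ Lam L R,
          Complex.exp (Complex.I * (((p.1 : ℝ) * φ p.2 : ℝ) : ℂ))) ^ k := by
        congr 1
        rw [Finset.mul_sum, Complex.ofReal_sum, Finset.sum_product]
        rw [Finset.sum_congr rfl fun x (_ : x ∈ Lam L R) => SG.h2cos (φ x)]
        exact Finset.sum_comm
    _ = ∑ ω ∈ SG.cfg L R k, ∏ j,
          Complex.exp (Complex.I * ((((ω j).1 : ℝ) * φ ((ω j).2) : ℝ) : ℂ)) :=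
        Finset.sum_pow' _ _ k
    _ = ∑ ω ∈ SG.cfg L R k,
          Complex.exp (Complex.I * ((∑ j, ((ω j).1 : ℝ) * φ ((ω j).2) : ℝ) : ℂ)) := by
        refine Finset.sum_congr rfl fun ω _ => ?_
        rw [← Complex.exp_sum]
        congr 1
        push_cast
        rw [Finset.mul_sum]

set_option maxHeartbeats 1000000 in
lemma SG.expansion {L R : ℕ} (hL : 0 < L) {β m z : ℝ} {μ : Measure ((ℤ × ℤ) → ℝ)}
    (hμ : IsGaussianCov L R β m μ) :
    ∫ φ : (ℤ × ℤ) → ℝ, Real.exp (2 * z * ∑ x ∈ Lam L R, Real.cos (φ x)) ∂μ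
      = ∑' n : ℕ, (z ^ n / (n.factorial : ℝ)) *
          ∑ ω ∈ SG.cfg L R n, Real.exp (-(β / 2 * SG.Qf L R m ω)) := by
  classical
  haveI := hμ.1
  have hSmeas : Measurable fun φ : (ℤ × ℤ) → ℝ => ∑ x ∈ Lam L R, Real.cos (φ x) :=
    Finset.measurable_sum _ fun x _ =>
      Real.continuous_cos.measurable.comp (measurable_pi_apply x)
  have hSbd : ∀ φ : (ℤ × ℤ) → ℝ, |∑ x ∈ Lam L R, Real.cos (φ x)| ≤ ((Lam L R).card : ℝ) := by
    intro φ
    calc |∑ x ∈ Lam L R, Real.cos (φ x)| ≤ ∑ x ∈ Lam L R, |Real.cos (φ x)| :=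
          Finset.abs_sum_le_sum_abs _ _
      _ ≤ ∑ _x ∈ Lam L R, (1 : ℝ) := Finset.sum_le_sum fun x _ => Real.abs_cos_le_one _
      _ = ((Lam L R).card : ℝ) := by simp
  have hpt : ∀ φ : (ℤ × ℤ) → ℝ, Real.exp (2 * z * ∑ x ∈ Lam L R, Real.cos (φ x))
      = ∑' n : ℕ, (2 * z * ∑ x ∈ Lam L R, Real.cos (φ x)) ^ n / (n.factorial : ℝ) := by
    intro φ
    rw [Real.exp_eq_exp_ℝ, NormedSpace.exp_eq_tsum_div]
  rw [integral_congr_ae (Filter.Eventually.of_forall hpt)]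
  have hmeas : ∀ n : ℕ, AEStronglyMeasurable
      (fun φ : (ℤ × ℤ) → ℝ =>
        (2 * z * ∑ x ∈ Lam L R, Real.cos (φ x)) ^ n / (n.factorial : ℝ)) μ :=
    fun n => (((hSmeas.const_mul (2 * z)).pow_const n).div_const _).aestronglyMeasurable
  have hbd : ∀ (n : ℕ) (φ : (ℤ × ℤ) → ℝ),
      ‖(2 * z * ∑ x ∈ Lam L R, Real.cos (φ x)) ^ n / (n.factorial : ℝ)‖
        ≤ (|2 * z| * ((Lam L R).card : ℝ)) ^ n / (n.factorial : ℝ) := by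
    intro n φ
    have h1 : |2 * z * ∑ x ∈ Lam L R, Real.cos (φ x)| ≤ |2 * z| * ((Lam L R).card : ℝ) := by
      rw [abs_mul]
      exact mul_le_mul_of_nonneg_left (hSbd φ) (abs_nonneg _)
    calc ‖(2 * z * ∑ x ∈ Lam L R, Real.cos (φ x)) ^ n / (n.factorial : ℝ)‖
        = |2 * z * ∑ x ∈ Lam L R, Real.cos (φ x)| ^ n / (n.factorial : ℝ) := by
          rw [norm_div, norm_pow, Real.norm_eq_abs, Real.norm_eq_abs, Nat.abs_cast]
      _ ≤ (|2 * z| * ((Lam L R).card : ℝ)) ^ n / (n.factorial : ℝ) := by gcongr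
  have hne : ∑' n : ℕ, ∫⁻ φ, ‖(2 * z * ∑ x ∈ Lam L R, Real.cos (φ x)) ^ n /
      (n.factorial : ℝ)‖₊ ∂μ ≠ ⊤ := by
    have hle : ∀ n : ℕ, ∫⁻ φ, ‖(2 * z * ∑ x ∈ Lam L R, Real.cos (φ x)) ^ n /
        (n.factorial : ℝ)‖₊ ∂μ
        ≤ ENNReal.ofReal ((|2 * z| * ((Lam L R).card : ℝ)) ^ n / (n.factorial : ℝ)) := by
      intro n
      calc ∫⁻ φ, ‖(2 * z * ∑ x ∈ Lam L R, Real.cos (φ x)) ^ n / (n.factorial : ℝ)‖₊ ∂μ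
          ≤ ∫⁻ _φ, ENNReal.ofReal ((|2 * z| * ((Lam L R).card : ℝ)) ^ n /
              (n.factorial : ℝ)) ∂μ := by
            refine lintegral_mono fun φ => ?_
            rw [← ENNReal.ofReal_coe_nnreal, coe_nnnorm]
            exact ENNReal.ofReal_le_ofReal (hbd n φ)
        _ = ENNReal.ofReal ((|2 * z| * ((Lam L R).card : ℝ)) ^ n / (n.factorial : ℝ)) := by
            rw [lintegral_const, measure_univ, mul_one]
    refine ne_of_lt (lt_of_le_of_lt (ENNReal.tsum_le_tsum hle) ?_)
    rw [← ENNReal.ofReal_tsum_of_nonneg (fun n => by positivity)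
      (Real.summable_pow_div_factorial _)]
    exact ENNReal.ofReal_lt_top
  rw [MeasureTheory.integral_tsum hmeas hne]
  refine tsum_congr fun n => ?_
  have hsplit : ∀ φ : (ℤ × ℤ) → ℝ,
      (2 * z * ∑ x ∈ Lam L R, Real.cos (φ x)) ^ n / (n.factorial : ℝ)
        = (z ^ n / (n.factorial : ℝ)) * (2 * ∑ x ∈ Lam L R, Real.cos (φ x)) ^ n := by
    intro φ
    rw [show 2 * z * ∑ x ∈ Lam L R, Real.cos (φ x)
      = z * (2 * ∑ x ∈ Lam L R, Real.cos (φ x)) from by ring, mul_pow]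
    ring
  rw [integral_congr_ae (Filter.Eventually.of_forall hsplit), MeasureTheory.integral_const_mul]
  congr 1
  have h1 : ((∫ φ, (2 * ∑ x ∈ Lam L R, Real.cos (φ x)) ^ n ∂μ : ℝ) : ℂ)
      = ∫ φ, (((2 * ∑ x ∈ Lam L R, Real.cos (φ x)) ^ n : ℝ) : ℂ) ∂μ := (integral_ofReal).symm
  have h2 : ∫ φ, (((2 * ∑ x ∈ Lam L R, Real.cos (φ x)) ^ n : ℝ) : ℂ) ∂μ
      = ∑ ω ∈ SG.cfg L R n, Complex.exp (-((β / 2 * SG.Qf L R m ω : ℝ) : ℂ)) := by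
    calc ∫ φ, (((2 * ∑ x ∈ Lam L R, Real.cos (φ x)) ^ n : ℝ) : ℂ) ∂μ
        = ∫ φ, ∑ ω ∈ SG.cfg L R n,
            Complex.exp (Complex.I * ((∑ j, ((ω j).1 : ℝ) * φ ((ω j).2) : ℝ) : ℂ)) ∂μ := by
          refine integral_congr_ae (Filter.Eventually.of_forall fun φ => ?_)
          show (((2 * ∑ x ∈ Lam L R, Real.cos (φ x)) ^ n : ℝ) : ℂ)
              = ∑ ω ∈ SG.cfg L R n,
                  Complex.exp (Complex.I * ((∑ j, ((ω j).1 : ℝ) * φ ((ω j).2) : ℝ) : ℂ))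
          rw [← SG.pow_expand n φ]
          push_cast
          rfl
      _ = ∑ ω ∈ SG.cfg L R n, ∫ φ, Complex.exp
            (Complex.I * ((∑ j, ((ω j).1 : ℝ) * φ ((ω j).2) : ℝ) : ℂ)) ∂μ :=
          integral_finset_sum _ fun ω _ => SG.integrable_exp ω
      _ = ∑ ω ∈ SG.cfg L R n, Complex.exp (-((β / 2 * SG.Qf L R m ω : ℝ) : ℂ)) :=
          Finset.sum_congr rfl fun ω hω => SG.charfun hμ hω
  have h4 := congrArg Complex.re (h1.trans h2)
  rw [Complex.ofReal_re, Complex.re_sum] at h4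
  rw [h4]
  refine Finset.sum_congr rfl fun ω _ => ?_
  rw [show -((β / 2 * SG.Qf L R m ω : ℝ) : ℂ)
    = Complex.ofReal (-(β / 2 * SG.Qf L R m ω)) from by push_cast; ring,
    Complex.exp_ofReal_re]

lemma SG.Tn_tendsto {L R : ℕ} (hL : 0 < L) {β z : ℝ} (hβ : 0 < β) (n : ℕ) :
    Filter.Tendsto (fun m : ℝ => (z ^ n / (n.factorial : ℝ)) *
        ∑ ω ∈ SG.cfg L R n, Real.exp (-(β / 2 * SG.Qf L R m ω)))
      (nhdsWithin 0 (Set.Ioi 0))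
      (nhds ((z ^ n / (n.factorial : ℝ)) *
        ∑ ω ∈ Omega0 L R n, Real.exp (-β * energy L R ω))) := by
  have h1 : ∑ ω ∈ Omega0 L R n, Real.exp (-β * energy L R ω)
      = ∑ ω ∈ SG.cfg L R n,
          if (∑ j, (ω j).1) = 0 then Real.exp (-β * energy L R ω) else 0 := by
    rw [SG.Omega0_eq, Finset.sum_filter]
  rw [h1]
  exact (tendsto_finset_sum _ fun ω _ => SG.exp_tendsto hL hβ ω).const_mul _

/-- Sine-Gordon representation of the Coulomb gas partition
function: `lim_{m→0⁺} E_{m,β}[exp(2z Σ_{x∈Λ} cos φ_x)] = Z_Λ(β,z)`. -/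
theorem statement6 (L R : ℕ) (hLodd : Odd L) (hL : 1 < L) (hR : 1 ≤ R)
    (β z : ℝ) (hβ : 0 < β) (hz : 0 ≤ z)
    (μ : ℝ → Measure ((ℤ × ℤ) → ℝ))
    (hμ : ∀ m : ℝ, 0 < m → IsGaussianCov L R β m (μ m)) :
    Filter.Tendsto
      (fun m : ℝ => ∫ φ : (ℤ × ℤ) → ℝ,
        Real.exp (2 * z * ∑ x ∈ Lam L R, Real.cos (φ x)) ∂(μ m))
      (nhdsWithin 0 (Set.Ioi 0)) (nhds (Zgc L R β z)) := by
  classical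
  have hL0 : 0 < L := by omega
  have hmain : Filter.Tendsto (fun m : ℝ => ∑' n : ℕ, (z ^ n / (n.factorial : ℝ)) *
      ∑ ω ∈ SG.cfg L R n, Real.exp (-(β / 2 * SG.Qf L R m ω)))
      (nhdsWithin 0 (Set.Ioi 0)) (nhds (Zgc L R β z)) := by
    have hsum : Summable (fun n : ℕ =>
        (2 * ((Lam L R).card : ℝ) * z) ^ n / (n.factorial : ℝ)) :=
      Real.summable_pow_div_factorial _
    have hZ : Zgc L R β z = ∑' n : ℕ, (z ^ n / (n.factorial : ℝ)) *
        ∑ ω ∈ Omega0 L R n, Real.exp (-β * energy L R ω) := rfl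
    rw [hZ]
    refine tendsto_tsum_of_dominated_convergence hsum
      (fun n => SG.Tn_tendsto hL0 hβ n) ?_
    filter_upwards [self_mem_nhdsWithin] with m hm
    intro n
    have hcard : ((SG.cfg L R n).card : ℝ) = ((2 * (Lam L R).card : ℕ) : ℝ) ^ n := by
      rw [SG.cfg, Fintype.card_piFinset_const, Finset.card_product]
      norm_num
    have hT0 : 0 ≤ (z ^ n / (n.factorial : ℝ)) *
        ∑ ω ∈ SG.cfg L R n, Real.exp (-(β / 2 * SG.Qf L R m ω)) := by
      apply mul_nonneg (div_nonneg (pow_nonneg hz n) (Nat.cast_nonneg _))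
      exact Finset.sum_nonneg fun ω _ => (Real.exp_pos _).le
    rw [Real.norm_eq_abs, _root_.abs_of_nonneg hT0]
    have hbound : ∑ ω ∈ SG.cfg L R n, Real.exp (-(β / 2 * SG.Qf L R m ω))
        ≤ ((SG.cfg L R n).card : ℝ) := by
      have h2 := Finset.sum_le_card_nsmul (SG.cfg L R n)
        (fun ω => Real.exp (-(β / 2 * SG.Qf L R m ω))) 1
        (fun ω hω => SG.exp_le_one (hμ m hm) hω)
      simpa using h2
    calc (z ^ n / (n.factorial : ℝ)) *
          ∑ ω ∈ SG.cfg L R n, Real.exp (-(β / 2 * SG.Qf L R m ω))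
        ≤ (z ^ n / (n.factorial : ℝ)) * ((SG.cfg L R n).card : ℝ) :=
          mul_le_mul_of_nonneg_left hbound
            (div_nonneg (pow_nonneg hz n) (Nat.cast_nonneg _))
      _ = (2 * ((Lam L R).card : ℝ) * z) ^ n / (n.factorial : ℝ) := by
          rw [hcard]
          push_cast
          rw [mul_pow]
          ring
  refine Filter.Tendsto.congr' ?_ hmain
  filter_upwards [self_mem_nhdsWithin] with m hm
  exact (SG.expansion hL0 (hμ m hm)).symm
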